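/- Let n ≥ 1 and, for 0 ≤ k < n, let r_k be the ray with apex the origin and direction (cos(2πk/n), sin(2πk/n)). Then sSup { min_{0 ≤ k < n} d∠(x, r_k) : x ∈ ℝ² } = 2π/n; that is, the lower bound 2π/n for the Brocard angle of the plane is attained by n rays with a common apex whose consecutive directions differ by 2π/n. -/

import Mathlib

noncomputable section

open Real

abbrev Pt : Type := EuclideanSpace ℝ (Fin 2)

instance : Fact (Module.finrank ℝ Pt = 2) := ⟨finrank_euclideanSpace_fin⟩

noncomputable def stdOrient : Orientation ℝ Pt (Fin 2) :=
  (EuclideanSpace.basisFun (Fin 2) ℝ).toBasis.orientation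

/-- A ray in the plane, given by its apex and its direction vector. -/
structure Ray2 where
  apex : Pt
  dir : Pt

/-- The set of points of a ray. -/
def Ray2.carrier (r : Ray2) : Set Pt := {x | ∃ t : ℝ, 0 ≤ t ∧ x = r.apex + t • r.dir}

/-- The representative in `[0, 2π)` of an angle. -/
noncomputable def angleIco (θ : Real.Angle) : ℝ :=
  if 0 ≤ θ.toReal then θ.toReal else θ.toReal + 2 * π

open Classical in
/-- The counterclockwise angular distance from a point `x` to a ray `r`. -/
noncomputable def adist (x : Pt) (r : Ray2) : ℝ :=
  if x = r.apex then 0 else angleIco (stdOrient.oangle r.dir (x - r.apex))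

/-- The Voronoi region of a ray `r` in a finite set of rays `R`. -/
def rreg (R : Finset Ray2) (r : Ray2) : Set Pt :=
  {x | ∀ s ∈ R, s ≠ r → adist x r < adist x s}

/-- The rotating rays Voronoi diagram. -/
def RVD (R : Finset Ray2) : Set Pt :=
  (Set.univ \ ⋃ r ∈ R, rreg R r) ∪ ⋃ r ∈ R, r.carrier

/-- The point of the plane with the given coordinates. -/
noncomputable def pt (a b : ℝ) : Pt := (WithLp.equiv 2 (Fin 2 → ℝ)).symm ![a, b]

lemma pt0 (a b : ℝ) : pt a b 0 = a := rfl
lemma pt1 (a b : ℝ) : pt a b 1 = b := rfl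

lemma inner_pt (a b c d : ℝ) : (inner ℝ (pt a b) (pt c d) : ℝ) = a*c + b*d := by
  simp [pt, PiLp.inner_apply, Fin.sum_univ_two]
  ring

lemma areaForm_eq (x y : Pt) : stdOrient.areaForm x y = x 0 * y 1 - x 1 * y 0 := by
  rw [Orientation.areaForm_to_volumeForm,
    stdOrient.volumeForm_robust (EuclideanSpace.basisFun (Fin 2) ℝ) rfl,
    Module.Basis.det_apply, Matrix.det_fin_two]
  simp [Module.Basis.toMatrix_apply]
  ring

lemma unit_ne_zero (a : ℝ) : pt (cos a) (sin a) ≠ 0 := by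
  intro h
  have h0 : cos a = 0 := by rw [← pt0 (cos a) (sin a), h]; rfl
  have h1 : sin a = 0 := by rw [← pt1 (cos a) (sin a), h]; rfl
  have := sin_sq_add_cos_sq a
  rw [h0, h1] at this; norm_num at this

lemma oangle_unit (a b : ℝ) :
    stdOrient.oangle (pt (cos a) (sin a)) (pt (cos b) (sin b)) = ((b - a : ℝ) : Real.Angle) := by
  have hk : stdOrient.kahler (pt (cos a) (sin a)) (pt (cos b) (sin b))
      = (Real.cos (b - a) : ℂ) + (Real.sin (b - a) : ℂ) * Complex.I := by
    rw [Orientation.kahler_apply_apply, areaForm_eq, inner_pt, pt0, pt0, pt1, pt1,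
      Real.cos_sub, Real.sin_sub, Complex.real_smul]
    push_cast
    ring
  rw [Orientation.oangle, hk]
  have := Complex.arg_cos_add_sin_mul_I_coe_angle ((b - a : ℝ) : Real.Angle)
  rwa [Real.Angle.cos_coe, Real.Angle.sin_coe] at this

lemma angleIco_nonneg (θ : Real.Angle) : 0 ≤ angleIco θ := by
  unfold angleIco
  split
  · assumption
  · nlinarith [θ.neg_pi_lt_toReal, Real.pi_pos]

lemma angleIco_lt (θ : Real.Angle) : angleIco θ < 2 * π := by
  unfold angleIco
  split
  · nlinarith [θ.toReal_le_pi, Real.pi_pos]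
  · nlinarith [θ.toReal_le_pi]

lemma coe_angleIco (θ : Real.Angle) : ((angleIco θ : ℝ) : Real.Angle) = θ := by
  unfold angleIco
  split
  · exact θ.coe_toReal
  · rw [Real.Angle.coe_add, Real.Angle.coe_two_pi, add_zero, θ.coe_toReal]

lemma angleIco_coe {θ : ℝ} (h0 : 0 ≤ θ) (h2 : θ < 2 * π) : angleIco (θ : Real.Angle) = θ := by
  unfold angleIco
  rcases le_or_gt θ π with h | h
  · have ht : ((θ : ℝ) : Real.Angle).toReal = θ :=
      Real.Angle.toReal_coe_eq_self_iff.mpr ⟨by linarith [Real.pi_pos], h⟩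
    rw [ht, if_pos h0]
  · have hcoe : ((θ : ℝ) : Real.Angle) = ((θ - 2 * π : ℝ) : Real.Angle) := by
      rw [Real.Angle.coe_sub, Real.Angle.coe_two_pi, sub_zero]
    have ht : ((θ : ℝ) : Real.Angle).toReal = θ - 2 * π := by
      rw [hcoe]
      exact Real.Angle.toReal_coe_eq_self_iff.mpr ⟨by linarith, by linarith [Real.pi_pos]⟩
    rw [ht, if_neg (by linarith)]
    ring

/-- `n` rays with a common apex whose consecutive directions differ by `2π/n`
attain the lower bound `2π/n` for the Brocard angle of the plane. -/
theorem stmt6 (n : ℕ) (hn : 1 ≤ n) :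
    sSup {y : ℝ | ∃ x : Pt,
        y = (Finset.range n).inf' (Finset.nonempty_range_iff.mpr (by omega))
          fun k => adist x ⟨0, pt (cos (2 * π * k / n)) (sin (2 * π * k / n))⟩} =
      2 * π / n := by
  have hn0 : (0:ℝ) < n := by exact_mod_cast hn
  set c : ℝ := 2 * π / n with hc
  have hcpos : 0 < c := by positivity
  have hnc : (n:ℝ) * c = 2 * π := by rw [hc, mul_div_assoc']; exact mul_div_cancel_left₀ _ hn0.ne'
  have hc2 : c ≤ 2 * π := by
    rw [hc]
    exact div_le_self (by positivity) (by exact_mod_cast hn)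
  have hax : ∀ (x : Pt), x ≠ 0 → ∀ a : ℝ, adist x ⟨0, pt (cos a) (sin a)⟩
      = angleIco (stdOrient.oangle (pt (cos a) (sin a)) x) := by
    intro x hx a
    have : adist x ⟨0, pt (cos a) (sin a)⟩
        = angleIco (stdOrient.oangle (pt (cos a) (sin a)) (x - 0)) := if_neg hx
    rwa [sub_zero] at this
  have key : ∀ (x : Pt), x ≠ 0 → ∀ a : ℝ, adist x ⟨0, pt (cos a) (sin a)⟩
      = angleIco (((angleIco (stdOrient.oangle (pt (cos 0) (sin 0)) x) - a : ℝ) : Real.Angle)) := by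
    intro x hx a
    rw [hax x hx a]
    congr 1
    conv_lhs => rw [← stdOrient.oangle_add (unit_ne_zero a) (unit_ne_zero 0) hx,
      oangle_unit a 0, ← coe_angleIco (stdOrient.oangle (pt (cos 0) (sin 0)) x)]
    rw [← Real.Angle.coe_add]
    congr 1
    ring
  refine csSup_eq_of_forall_le_of_forall_lt_exists_gt ⟨_, 0, rfl⟩ ?_ ?_
  · rintro y ⟨x, rfl⟩
    by_cases hx : x = 0
    · subst hx
      refine le_trans (Finset.inf'_le _ (Finset.mem_range.mpr (by omega) : 0 ∈ Finset.range n)) ?_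
      have : adist (0:Pt) ⟨0, pt (cos (2 * π * (0:ℕ) / n)) (sin (2 * π * (0:ℕ) / n))⟩ = 0 :=
        if_pos rfl
      rw [this]
      exact hcpos.le
    · set t := angleIco (stdOrient.oangle (pt (cos 0) (sin 0)) x) with htdef
      have ht0 : 0 ≤ t := angleIco_nonneg _
      have ht2 : t < 2 * π := angleIco_lt _
      set k : ℕ := ⌊t / c⌋₊ with hkdef
      have hkc : (k:ℝ) * c ≤ t := by
        have h := Nat.floor_le (div_nonneg ht0 hcpos.le)
        calc (k:ℝ) * c ≤ (t/c) * c := mul_le_mul_of_nonneg_right h hcpos.le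
        _ = t := by field_simp
      have htk : t < ((k:ℝ) + 1) * c := by
        have h := Nat.lt_floor_add_one (t/c)
        calc t = (t/c) * c := by field_simp
        _ < ((k:ℝ) + 1) * c := by
            apply mul_lt_mul_of_pos_right _ hcpos
            exact_mod_cast h
      have hkn : k < n := by
        rw [hkdef, Nat.floor_lt (div_nonneg ht0 hcpos.le), div_lt_iff₀ hcpos]
        linarith
      refine le_trans (Finset.inf'_le _ (Finset.mem_range.mpr hkn)) ?_
      rw [key x hx (2 * π * k / n)]
      have ha : 2 * π * (k:ℝ) / n = k * c := by rw [hc]; ring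
      rw [ha, angleIco_coe (by linarith) (by linarith)]
      linarith
  · intro w hw
    set φ : ℝ := max (c/2) ((w+c)/2) with hφ
    have hφ0 : 0 < φ := lt_of_lt_of_le (half_pos hcpos) (le_max_left _ _)
    have hφc : φ < c := max_lt (half_lt_self hcpos) (by linarith)
    have hφw : w < φ := lt_of_lt_of_le (by linarith) (le_max_right _ _)
    refine ⟨_, ⟨pt (cos φ) (sin φ), rfl⟩, ?_⟩
    rw [Finset.lt_inf'_iff]
    intro k hk
    rw [key _ (unit_ne_zero φ) _]
    have htφ : angleIco (stdOrient.oangle (pt (cos 0) (sin 0)) (pt (cos φ) (sin φ))) = φ := by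
      rw [oangle_unit, sub_zero, angleIco_coe hφ0.le (by linarith)]
    have ha : 2 * π * (k:ℝ) / n = k * c := by rw [hc]; ring
    rw [htφ, ha]
    rcases Nat.eq_zero_or_pos k with h0 | h1
    · subst h0
      push_cast
      rw [zero_mul, sub_zero, angleIco_coe hφ0.le (by linarith)]
      exact hφw
    · have hk1 : (1:ℝ) ≤ (k:ℝ) := by exact_mod_cast h1
      have hkr : (k:ℝ) ≤ (n:ℝ) - 1 := by
        have h := Finset.mem_range.mp hk
        have h2 : (k:ℝ) + 1 ≤ (n:ℝ) := by exact_mod_cast Nat.succ_le_of_lt h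
        linarith
      have hkc2 : (k:ℝ) * c ≤ ((n:ℝ) - 1) * c := mul_le_mul_of_nonneg_right hkr hcpos.le
      have hn1c : ((n:ℝ) - 1) * c = 2 * π - c := by rw [sub_mul, one_mul, hnc]
      have hck : c ≤ (k:ℝ) * c := le_mul_of_one_le_left hcpos.le hk1
      have hcoe2 : ((φ - (k:ℝ)*c : ℝ) : Real.Angle) = ((φ - (k:ℝ)*c + 2*π : ℝ) : Real.Angle) := by
        rw [Real.Angle.coe_add, Real.Angle.coe_two_pi, add_zero]
      rw [hcoe2, angleIco_coe (by linarith) (by linarith)]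
      linarith
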